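/- Let q be a prime power and let k ≥ b ≥ 1 be integers. Then there is no F_q-linear code of length q^k - 1 and dimension k + 1 whose minimum b-symbol distance is greater than or equal to q^k - q^{k-b}. In particular, a code of length q^k - 1, dimension k + 1 and minimum b-symbol distance q^k - q^{k-b} - 1 is distance-optimal. -/
import Mathlib


/-- The `b`-symbol weight of a vector `c ∈ F^n` (coordinates indexed cyclically by `ZMod n`). -/
noncomputable def bWt {n : ℕ} {F : Type*} [Zero F] (b : ℕ) (c : ZMod n → F) : ℕ :=
  Nat.card {i : ZMod n | ∃ j < b, c (i + (j : ZMod n)) ≠ 0}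

/-- There is no `F_q`-linear code of length `q^k - 1` and dimension `k+1` all of whose
nonzero codewords have `b`-symbol weight `≥ q^k - q^{k-b}` (i.e. with minimum `b`-symbol
distance `≥ q^k - q^{k-b}`). -/
theorem stmt13 (q k b : ℕ) (hb : 1 ≤ b) (hkb : b ≤ k)
    (F : Type*) [Field F] [Fintype F] (hF : Fintype.card F = q) :
    ¬ ∃ C : Submodule F (ZMod (q ^ k - 1) → F),
        Module.finrank F C = k + 1 ∧
        ∀ c ∈ C, c ≠ 0 → q ^ k - q ^ (k - b) ≤ bWt b c := by
  classical
  rintro ⟨C, hC, hmin⟩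
  have hq2 : 2 ≤ q := hF ▸ Fintype.one_lt_card
  have hk1 : 1 ≤ k := hb.trans hkb
  have hs2 : 2 ≤ q ^ k := le_trans hq2 (Nat.le_self_pow (by omega) q)
  haveI : NeZero (q ^ k - 1) := ⟨by omega⟩
  have hcard : Fintype.card C = q ^ (k + 1) := by
    rw [Module.card_eq_pow_finrank (K := F), hF, hC]
  set P : ZMod (q ^ k - 1) → (ZMod (q ^ k - 1) → F) → Prop :=
    fun i c => ∃ j < b, c (i + (j : ZMod (q ^ k - 1))) ≠ 0 with hP
  have hbWt : ∀ c : ZMod (q ^ k - 1) → F,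
      bWt b c = (Finset.univ.filter (fun i => P i c)).card := by
    intro c
    rw [bWt, Nat.card_eq_fintype_card, Fintype.card_subtype]
    congr 1
  -- double counting
  have key : ∑ c : C, bWt b (c : ZMod (q ^ k - 1) → F)
      = ∑ i : ZMod (q ^ k - 1),
          (Finset.univ.filter (fun c : C => P i (c : ZMod (q ^ k - 1) → F))).card := by
    simp only [hbWt, Finset.card_filter]
    exact Finset.sum_comm
  -- per-position upper bound via the kernel of the window projection
  have hi : ∀ i : ZMod (q ^ k - 1),
      (Finset.univ.filter (fun c : C => P i (c : ZMod (q ^ k - 1) → F))).card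
        ≤ q ^ (k + 1) - q ^ (k + 1 - b) := by
    intro i
    set φ : C →ₗ[F] (Fin b → F) :=
      (LinearMap.pi fun j : Fin b =>
        LinearMap.proj (i + ((j : ℕ) : ZMod (q ^ k - 1)))).comp C.subtype with hφ
    have hker : ∀ c : C, c ∈ LinearMap.ker φ ↔ ¬ P i (c : ZMod (q ^ k - 1) → F) := by
      intro c
      simp only [LinearMap.mem_ker, hφ, LinearMap.comp_apply, Submodule.coe_subtype,
        funext_iff, LinearMap.pi_apply, LinearMap.proj_apply, Pi.zero_apply, hP]
      push_neg
      constructor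
      · intro h j hj
        simpa using h ⟨j, hj⟩
      · intro h j
        exact h j j.isLt
    have h1 : (Finset.univ.filter
        (fun c : C => ¬ P i (c : ZMod (q ^ k - 1) → F))).card
        = Fintype.card (LinearMap.ker φ) := by
      rw [← Fintype.card_subtype]
      exact Fintype.card_congr (Equiv.subtypeEquivRight fun c => (hker c).symm)
    have hr : Module.finrank F (LinearMap.range φ) ≤ b := by
      have := Submodule.finrank_le (LinearMap.range φ)
      simpa [Module.finrank_pi] using this
    have hrn := LinearMap.finrank_range_add_finrank_ker φ
    rw [hC] at hrn
    have h2 : k + 1 - b ≤ Module.finrank F (LinearMap.ker φ) := by omega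
    have h3 : q ^ (k + 1 - b) ≤ Fintype.card (LinearMap.ker φ) := by
      rw [Module.card_eq_pow_finrank (K := F), hF]
      exact Nat.pow_le_pow_right (by omega) h2
    have h4 := Finset.card_filter_add_card_filter_not
      (s := (Finset.univ : Finset C)) (fun c : C => P i (c : ZMod (q ^ k - 1) → F))
    rw [Finset.card_univ, hcard] at h4
    omega
  -- lower bound on the total sum
  have hlow : (q ^ (k + 1) - 1) * (q ^ k - q ^ (k - b))
      ≤ ∑ c : C, bWt b (c : ZMod (q ^ k - 1) → F) := by
    have hne : ∀ c : C, c ≠ 0 → q ^ k - q ^ (k - b) ≤ bWt b (c : ZMod (q ^ k - 1) → F) := by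
      intro c hc
      refine hmin c c.2 ?_
      simpa [Submodule.coe_eq_zero] using hc
    calc (q ^ (k + 1) - 1) * (q ^ k - q ^ (k - b))
        = (Finset.univ.filter (fun c : C => c ≠ 0)).card * (q ^ k - q ^ (k - b)) := by
          rw [Finset.filter_ne', Finset.card_erase_of_mem (Finset.mem_univ 0),
            Finset.card_univ, hcard]
      _ ≤ ∑ c ∈ Finset.univ.filter (fun c : C => c ≠ 0),
            bWt b (c : ZMod (q ^ k - 1) → F) := by
          simpa using Finset.card_nsmul_le_sum
            (Finset.univ.filter (fun c : C => c ≠ 0)) _ _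
            (fun c hc => hne c (by simpa using hc))
      _ ≤ ∑ c : C, bWt b (c : ZMod (q ^ k - 1) → F) :=
          Finset.sum_le_sum_of_subset (Finset.filter_subset _ _)
  -- upper bound on the total sum
  have hup : ∑ i : ZMod (q ^ k - 1),
      (Finset.univ.filter (fun c : C => P i (c : ZMod (q ^ k - 1) → F))).card
      ≤ (q ^ k - 1) * (q ^ (k + 1) - q ^ (k + 1 - b)) := by
    calc _ ≤ ∑ _i : ZMod (q ^ k - 1), (q ^ (k + 1) - q ^ (k + 1 - b)) :=
          Finset.sum_le_sum fun i _ => hi i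
      _ = (q ^ k - 1) * (q ^ (k + 1) - q ^ (k + 1 - b)) := by
          rw [Finset.sum_const, Finset.card_univ, ZMod.card, smul_eq_mul]
  have hmain : (q ^ (k + 1) - 1) * (q ^ k - q ^ (k - b))
      ≤ (q ^ k - 1) * (q ^ (k + 1) - q ^ (k + 1 - b)) :=
    hlow.trans (key ▸ hup)
  -- final arithmetic contradiction
  set A := q ^ (k - b) with hA
  set s := q ^ k with hsdef
  have hAB : A * q ^ b = s := by
    rw [hA, hsdef, ← pow_add]
    congr 1
    omega
  have hB2 : 2 ≤ q ^ b := le_trans hq2 (Nat.le_self_pow (by omega) q)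
  have hA1 : 1 ≤ A := Nat.one_le_pow _ _ (by omega)
  have h2A : 2 * A ≤ s := by
    calc 2 * A = A * 2 := by ring
      _ ≤ A * q ^ b := Nat.mul_le_mul_left A hB2
      _ = s := hAB
  have hqk1 : q ^ (k + 1) = q * s := by rw [hsdef, pow_succ]; ring
  have hk1b : q ^ (k + 1 - b) = q * A := by
    rw [show k + 1 - b = (k - b) + 1 by omega, pow_succ, hA]; ring
  rw [hqk1, hk1b] at hmain
  have e1 : q * s - q * A = q * (s - A) := (Nat.mul_sub q s A).symm
  rw [e1] at hmain
  set t := s - A with ht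
  have ht1 : 1 ≤ t := by omega
  have h5 : q * (s - 1) + 1 ≤ q * s - 1 := by
    have hqs : q * 2 ≤ q * s := Nat.mul_le_mul_left q hs2
    have e2 : q * s = q * (s - 1) + q := by
      rw [Nat.mul_sub, Nat.mul_one]
      omega
    omega
  have h6 : (q * (s - 1) + 1) * t ≤ (q * s - 1) * t := Nat.mul_le_mul_right t h5
  have h7 : (s - 1) * (q * t) = q * (s - 1) * t := by ring
  rw [h7] at hmain
  have h8 : q * (s - 1) * t + t ≤ q * (s - 1) * t := by
    calc q * (s - 1) * t + t = (q * (s - 1) + 1) * t := by ring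
      _ ≤ (q * s - 1) * t := h6
      _ ≤ q * (s - 1) * t := hmain
  have h9 : t = 0 := by simpa using h8
  omega
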